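/- Let A be a nonempty finite type and let f : A → V and g : A → Ṽ be functions into finite types. Define the capacities C_f = ⨆_μ I_μ[X : f(X)] and C_g = ⨆_μ I_μ[X : g(X)], where the suprema range over all probability measures μ on A and X denotes the identity random variable with law μ. Then −(⨆_μ H_μ[g(X) | f(X)]) ≤ C_f − C_g ≤ ⨆_μ H_μ[f(X) | g(X)]. (Control part of the Universal bridge-gap bounds, eq. (control_gap), in the deterministic rollout-context form where the terminal quotient V = f(action sequence) and the observed terminal quotient Ṽ = g(action sequence).) -/

import Mathlib

open MeasureTheory Real

section InfoDefs

variable {Ω : Type*} [MeasurableSpace Ω]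

/-- Shannon entropy (natural log) of a random variable `X` with values in a finite type,
with respect to the measure `μ`. -/
noncomputable def ent (μ : Measure Ω) {S : Type*} [Fintype S] (X : Ω → S) : ℝ :=
  ∑ s : S, Real.negMulLog (μ (X ⁻¹' {s})).toReal

/-- Conditional entropy `H[X | Y] = H[X, Y] - H[Y]`. -/
noncomputable def condEnt (μ : Measure Ω) {S T : Type*} [Fintype S] [Fintype T]
    (X : Ω → S) (Y : Ω → T) : ℝ :=
  ent μ (fun ω => (X ω, Y ω)) - ent μ Y

/-- Mutual information `I[X : Y] = H[X] + H[Y] - H[X, Y]`. -/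
noncomputable def mutInfo (μ : Measure Ω) {S T : Type*} [Fintype S] [Fintype T]
    (X : Ω → S) (Y : Ω → T) : ℝ :=
  ent μ X + ent μ Y - ent μ (fun ω => (X ω, Y ω))

/-- Conditional mutual information `I[X : Y | Z] = H[X | Z] + H[Y | Z] - H[X, Y | Z]`. -/
noncomputable def condMutInfo (μ : Measure Ω) {S T U : Type*} [Fintype S] [Fintype T]
    [Fintype U] (X : Ω → S) (Y : Ω → T) (Z : Ω → U) : ℝ :=
  condEnt μ X Z + condEnt μ Y Z - condEnt μ (fun ω => (X ω, Y ω)) Z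

end InfoDefs

open scoped ENNReal


section Aux

lemma negMulLog_le_one' {x : ℝ} (hx : 0 ≤ x) : Real.negMulLog x ≤ 1 := by
  rcases eq_or_lt_of_le hx with h | h
  · simp [← h, Real.negMulLog]
  · have h1 : Real.log x⁻¹ ≤ x⁻¹ - 1 := Real.log_le_sub_one_of_pos (by positivity)
    have : Real.negMulLog x = x * Real.log x⁻¹ := by
      simp [Real.negMulLog, Real.log_inv]
    rw [this]
    calc x * Real.log x⁻¹ ≤ x * (x⁻¹ - 1) := by
          gcongr
      _ = 1 - x := by field_simp
      _ ≤ 1 := by linarith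

lemma negMulLog_sum_le {ι : Type*} (s : Finset ι) (w : ι → ℝ) (hw : ∀ i ∈ s, 0 ≤ w i) :
    Real.negMulLog (∑ i ∈ s, w i) ≤ ∑ i ∈ s, Real.negMulLog (w i) := by
  set S := ∑ i ∈ s, w i with hS
  have hterm : ∀ i ∈ s, -(w i * Real.log S) ≤ Real.negMulLog (w i) := by
    intro i hi
    rcases eq_or_lt_of_le (hw i hi) with h | h
    · simp [← h, Real.negMulLog]
    · have hle : w i ≤ S := Finset.single_le_sum hw hi
      have : Real.log (w i) ≤ Real.log S := Real.log_le_log h hle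
      have := mul_le_mul_of_nonneg_left this (hw i hi)
      simp only [Real.negMulLog]
      nlinarith
  calc Real.negMulLog S = ∑ i ∈ s, -(w i * Real.log S) := by
        simp [Real.negMulLog, ← Finset.sum_mul, Finset.sum_neg_distrib]
        exact Or.inl hS
    _ ≤ ∑ i ∈ s, Real.negMulLog (w i) := Finset.sum_le_sum hterm

end Aux

section EntLemmas

variable {Ω : Type*} [MeasurableSpace Ω]

lemma ent_nonneg (μ : Measure Ω) [IsProbabilityMeasure μ] {S : Type*} [Fintype S]
    (X : Ω → S) : 0 ≤ ent μ X := by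
  refine Finset.sum_nonneg fun s _ => Real.negMulLog_nonneg ENNReal.toReal_nonneg ?_
  have h1 : μ (X ⁻¹' {s}) ≤ 1 := prob_le_one
  calc (μ (X ⁻¹' {s})).toReal ≤ (1 : ℝ≥0∞).toReal :=
        ENNReal.toReal_mono ENNReal.one_ne_top h1
    _ = 1 := by simp

lemma ent_le_card (μ : Measure Ω) {S : Type*} [Fintype S] (X : Ω → S) :
    ent μ X ≤ Fintype.card S := by
  calc ent μ X ≤ ∑ _s : S, (1 : ℝ) :=
        Finset.sum_le_sum fun s _ => negMulLog_le_one' ENNReal.toReal_nonneg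
    _ = Fintype.card S := by simp

lemma ent_comp_inj (μ : Measure Ω) {S T : Type*} [Fintype S] [Fintype T]
    (X : Ω → S) {i : S → T} (hi : Function.Injective i) :
    ent μ (fun ω => i (X ω)) = ent μ X := by
  classical
  unfold ent
  calc ∑ t : T, Real.negMulLog (μ ((fun ω => i (X ω)) ⁻¹' {t})).toReal
      = ∑ t ∈ Finset.univ.image i,
          Real.negMulLog (μ ((fun ω => i (X ω)) ⁻¹' {t})).toReal := by
        refine (Finset.sum_subset (Finset.subset_univ _) ?_).symm
        intro t _ ht
        have h0 : (fun ω => i (X ω)) ⁻¹' {t} = ∅ := by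
          ext ω
          simp only [Set.mem_preimage, Set.mem_singleton_iff, Set.mem_empty_iff_false, iff_false]
          intro h
          exact ht (Finset.mem_image.2 ⟨X ω, Finset.mem_univ _, h⟩)
        simp [h0]
    _ = ∑ s : S, Real.negMulLog (μ ((fun ω => i (X ω)) ⁻¹' {i s})).toReal :=
        Finset.sum_image (fun a _ b _ h => hi h)
    _ = ∑ s : S, Real.negMulLog (μ (X ⁻¹' {s})).toReal := by
        refine Finset.sum_congr rfl fun s _ => ?_
        have h1 : (fun ω => i (X ω)) ⁻¹' {i s} = X ⁻¹' {s} := by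
          ext ω
          simp [hi.eq_iff]
        rw [h1]

lemma ent_fst_le [DiscreteMeasurableSpace Ω] (μ : Measure Ω) [IsFiniteMeasure μ]
    {S T : Type*} [Fintype S] [Fintype T] (X : Ω → S) (Y : Ω → T) :
    ent μ X ≤ ent μ (fun ω => (X ω, Y ω)) := by
  have hdec : ∀ s : S, (μ (X ⁻¹' {s})).toReal
      = ∑ t : T, (μ ((fun ω => (X ω, Y ω)) ⁻¹' {(s, t)})).toReal := by
    intro s
    have hun : X ⁻¹' {s} = ⋃ t ∈ (Finset.univ : Finset T),
        (fun ω => (X ω, Y ω)) ⁻¹' {(s, t)} := by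
      ext ω
      simp [Prod.ext_iff, eq_comm]
    have hdisj : Set.PairwiseDisjoint ↑(Finset.univ : Finset T)
        (fun t => (fun ω => (X ω, Y ω)) ⁻¹' {(s, t)}) := by
      intro a _ b _ hab
      refine Set.disjoint_left.2 fun ω h1 h2 => hab ?_
      simp only [Set.mem_preimage, Set.mem_singleton_iff, Prod.ext_iff] at h1 h2
      rw [← h1.2, h2.2]
    rw [hun, measure_biUnion_finset hdisj (fun t _ => MeasurableSet.of_discrete)]
    exact ENNReal.toReal_sum fun t _ => measure_ne_top μ _
  calc ent μ X = ∑ s : S, Real.negMulLog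
        (∑ t : T, (μ ((fun ω => (X ω, Y ω)) ⁻¹' {(s, t)})).toReal) := by
        unfold ent; exact Finset.sum_congr rfl fun s _ => by rw [hdec s]
    _ ≤ ∑ s : S, ∑ t : T, Real.negMulLog
          ((μ ((fun ω => (X ω, Y ω)) ⁻¹' {(s, t)})).toReal) :=
        Finset.sum_le_sum fun s _ =>
          negMulLog_sum_le _ _ fun t _ => ENNReal.toReal_nonneg
    _ = ent μ (fun ω => (X ω, Y ω)) := by
        unfold ent; rw [Fintype.sum_prod_type]

end EntLemmas



/-- **Universal bridge-gap bounds, control part** (deterministic rollout-context form).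
For a nonempty finite action-sequence type `A` and deterministic terminal quotients
`f : A → V` (terminal environment quotient) and `g : A → Vobs` (observed terminal
quotient), the capacities `C_f = ⨆_μ I_μ[X : f(X)]` and `C_g = ⨆_μ I_μ[X : g(X)]`
satisfy `−(⨆_μ H_μ[g(X)|f(X)]) ≤ C_f − C_g ≤ ⨆_μ H_μ[f(X)|g(X)]`, where `X` denotes
the identity random variable on `A` with law `μ`. -/
theorem bridge_gap_control
    {A : Type*} [Fintype A] [Nonempty A]
    [MeasurableSpace A] [MeasurableSingletonClass A]
    {V Vobs : Type*} [Fintype V] [Fintype Vobs]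
    (f : A → V) (g : A → Vobs) :
    -(⨆ μ : ProbabilityMeasure A, condEnt (μ : Measure A) g f) ≤
        (⨆ μ : ProbabilityMeasure A, mutInfo (μ : Measure A) (fun a => a) f) -
          (⨆ μ : ProbabilityMeasure A, mutInfo (μ : Measure A) (fun a => a) g) ∧
      (⨆ μ : ProbabilityMeasure A, mutInfo (μ : Measure A) (fun a => a) f) -
          (⨆ μ : ProbabilityMeasure A, mutInfo (μ : Measure A) (fun a => a) g) ≤
        ⨆ μ : ProbabilityMeasure A, condEnt (μ : Measure A) f g := by
  classical
  haveI hne : Nonempty (ProbabilityMeasure A) :=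
    ⟨⟨Measure.dirac (Classical.arbitrary A), Measure.dirac.isProbabilityMeasure⟩⟩
  have hmf : ∀ μ : ProbabilityMeasure A,
      mutInfo (μ : Measure A) (fun a => a) f = ent (μ : Measure A) f := by
    intro μ
    have h1 : ent (μ : Measure A) (fun a : A => (a, f a)) = ent (μ : Measure A) (fun a : A => a) :=
      ent_comp_inj (μ : Measure A) (fun a : A => a)
        (i := fun a : A => (a, f a)) (fun a b h => congrArg Prod.fst h)
    simp only [mutInfo, h1]
    ring
  have hmg : ∀ μ : ProbabilityMeasure A,
      mutInfo (μ : Measure A) (fun a => a) g = ent (μ : Measure A) g := by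
    intro μ
    have h1 : ent (μ : Measure A) (fun a : A => (a, g a)) = ent (μ : Measure A) (fun a : A => a) :=
      ent_comp_inj (μ : Measure A) (fun a : A => a)
        (i := fun a : A => (a, g a)) (fun a b h => congrArg Prod.fst h)
    simp only [mutInfo, h1]
    ring
  have bddF : BddAbove (Set.range fun μ : ProbabilityMeasure A =>
      mutInfo (μ : Measure A) (fun a => a) f) := by
    refine ⟨(Fintype.card V : ℝ), ?_⟩
    rintro x ⟨μ, rfl⟩
    simp only
    rw [hmf μ]
    exact ent_le_card _ _
  have bddG : BddAbove (Set.range fun μ : ProbabilityMeasure A =>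
      mutInfo (μ : Measure A) (fun a => a) g) := by
    refine ⟨(Fintype.card Vobs : ℝ), ?_⟩
    rintro x ⟨μ, rfl⟩
    simp only
    rw [hmg μ]
    exact ent_le_card _ _
  have bddHfg : BddAbove (Set.range fun μ : ProbabilityMeasure A =>
      condEnt (μ : Measure A) f g) := by
    refine ⟨(Fintype.card (V × Vobs) : ℝ), ?_⟩
    rintro x ⟨μ, rfl⟩
    simp only
    have h1 : ent (μ : Measure A) (fun a => (f a, g a)) ≤ Fintype.card (V × Vobs) :=
      ent_le_card _ _
    have h2 : 0 ≤ ent (μ : Measure A) g := ent_nonneg _ _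
    simp only [condEnt]
    linarith
  have bddHgf : BddAbove (Set.range fun μ : ProbabilityMeasure A =>
      condEnt (μ : Measure A) g f) := by
    refine ⟨(Fintype.card (Vobs × V) : ℝ), ?_⟩
    rintro x ⟨μ, rfl⟩
    simp only
    have h1 : ent (μ : Measure A) (fun a => (g a, f a)) ≤ Fintype.card (Vobs × V) :=
      ent_le_card _ _
    have h2 : 0 ≤ ent (μ : Measure A) f := ent_nonneg _ _
    simp only [condEnt]
    linarith
  constructor
  · have h : (⨆ μ : ProbabilityMeasure A, mutInfo (μ : Measure A) (fun a => a) g) ≤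
        (⨆ μ : ProbabilityMeasure A, mutInfo (μ : Measure A) (fun a => a) f) +
        (⨆ μ : ProbabilityMeasure A, condEnt (μ : Measure A) g f) := by
      refine ciSup_le fun μ => ?_
      rw [hmg μ]
      have hkey : ent (μ : Measure A) g ≤
          mutInfo (μ : Measure A) (fun a => a) f + condEnt (μ : Measure A) g f := by
        rw [hmf μ]
        have := ent_fst_le (μ : Measure A) g f
        simp only [condEnt]
        linarith
      refine hkey.trans (add_le_add ?_ ?_)
      · exact le_ciSup bddF μ
      · exact le_ciSup bddHgf μ
    linarith
  · have h : (⨆ μ : ProbabilityMeasure A, mutInfo (μ : Measure A) (fun a => a) f) ≤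
        (⨆ μ : ProbabilityMeasure A, mutInfo (μ : Measure A) (fun a => a) g) +
        (⨆ μ : ProbabilityMeasure A, condEnt (μ : Measure A) f g) := by
      refine ciSup_le fun μ => ?_
      rw [hmf μ]
      have hkey : ent (μ : Measure A) f ≤
          mutInfo (μ : Measure A) (fun a => a) g + condEnt (μ : Measure A) f g := by
        rw [hmg μ]
        have := ent_fst_le (μ : Measure A) f g
        simp only [condEnt]
        linarith
      refine hkey.trans (add_le_add ?_ ?_)
      · exact le_ciSup bddG μ
      · exact le_ciSup bddHfg μ
    linarith
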